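/- Let T be a linear subspace of ℝⁿ with orthogonal projection P_T, and let P̂ : ℝⁿ → ℝⁿ be a symmetric positive semidefinite linear map. Then I + P̂ is invertible, and the linear map W = P_T ∘ (I + P̂)^{-1} ∘ P_T is firmly nonexpansive: for every x ∈ ℝⁿ, ‖W x‖² ≤ ⟨W x, x⟩. -/

import Mathlib

noncomputable section
open Filter Topology

/-- `ℝⁿ` as a Euclidean space. -/
abbrev E (n : ℕ) := EuclideanSpace ℝ (Fin n)

/-- Orthogonal projection onto a subspace `T`, as an endomorphism of `ℝⁿ`. -/
def projCLM {n : ℕ} (T : Submodule ℝ (E n)) : E n →L[ℝ] E n :=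
  T.subtypeL.comp (T.orthogonalProjectionOnto)

/-- A linear map is symmetric positive semidefinite. -/
def IsSymPSD {n : ℕ} (A : E n →L[ℝ] E n) : Prop :=
  (∀ x y : E n, (inner ℝ (A x) y : ℝ) = inner ℝ x (A y)) ∧ ∀ x : E n, (0 : ℝ) ≤ inner ℝ (A x) x

/-- `W = P_T ∘ (I + P_T ∘ H ∘ P_T)⁻¹ ∘ P_T`, the building block of the Douglas–Rachford
fixed-point matrix (`Ring.inverse` is the genuine inverse since `I + P_T H P_T` is
invertible for symmetric positive semidefinite `H`). -/
def Wop {n : ℕ} (T : Submodule ℝ (E n)) (H : E n →L[ℝ] E n) : E n →L[ℝ] E n :=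
  projCLM T * Ring.inverse (1 + projCLM T * H * projCLM T) * projCLM T

/-- The Douglas–Rachford fixed-point matrix `M = I + 2 W_G W_J − W_G − W_J`. -/
def Mop {n : ℕ} (TJ TG : Submodule ℝ (E n)) (HJ HG : E n →L[ℝ] E n) : E n →L[ℝ] E n :=
  1 + (2 : ℝ) • (Wop TG HG * Wop TJ HJ) - Wop TG HG - Wop TJ HJ

/-- The relaxed matrix `M_λ = (1 − λ) I + λ M`. -/
def Mlam {n : ℕ} (lam : ℝ) (TJ TG : Submodule ℝ (E n)) (HJ HG : E n →L[ℝ] E n) :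
    E n →L[ℝ] E n :=
  (1 - lam) • (1 : E n →L[ℝ] E n) + lam • Mop TJ TG HJ HG

/-- The fixed-point set `Fix A = {x | A x = x}` as a submodule, i.e. `ker (A − I)`. -/
def FixM {n : ℕ} (A : E n →L[ℝ] E n) : Submodule ℝ (E n) :=
  LinearMap.ker ((A - 1 : E n →L[ℝ] E n) : E n →ₗ[ℝ] E n)

/-- `M^∞`: the orthogonal projection onto `Fix M`. -/
def Minf {n : ℕ} (TJ TG : Submodule ℝ (E n)) (HJ HG : E n →L[ℝ] E n) : E n →L[ℝ] E n :=
  projCLM (FixM (Mop TJ TG HJ HG))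

/-- The spectral radius of an endomorphism of `ℝⁿ`: the supremum of the moduli of the
complex eigenvalues (eigenvalues of the complexified matrix). -/
def specRad {n : ℕ} (A : E n →L[ℝ] E n) : ℝ :=
  sSup ((fun z : ℂ => ‖z‖) ''
    spectrum ℂ (((LinearMap.toMatrix (EuclideanSpace.basisFun (Fin n) ℝ).toBasis
      (EuclideanSpace.basisFun (Fin n) ℝ).toBasis) A.toLinearMap).map (algebraMap ℝ ℂ)))

/-- The cosine of the Friedrichs angle between two subspaces `U` and `V`. -/
def cF {n : ℕ} (U V : Submodule ℝ (E n)) : ℝ :=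
  sSup {r : ℝ | ∃ u v : E n, u ∈ U ⊓ (U ⊓ V)ᗮ ∧ v ∈ V ⊓ (U ⊓ V)ᗮ ∧
    ‖u‖ ≤ 1 ∧ ‖v‖ ≤ 1 ∧ r = (inner ℝ u v : ℝ)}

/-- For a subspace `T` and a symmetric positive semidefinite `P̂`,
`I + P̂` is invertible and `W = P_T (I + P̂)⁻¹ P_T` is firmly nonexpansive:
`‖W x‖² ≤ ⟨W x, x⟩` for all `x`. -/
theorem statement6 {n : ℕ} (T : Submodule ℝ (E n)) (Phat : E n →L[ℝ] E n)
    (hPhat : IsSymPSD Phat) :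
    IsUnit (1 + Phat) ∧
    ∀ x : E n,
      ‖(projCLM T * Ring.inverse (1 + Phat) * projCLM T) x‖ ^ 2
        ≤ (inner ℝ ((projCLM T * Ring.inverse (1 + Phat) * projCLM T) x) x : ℝ) := by
  obtain ⟨hsym, hpsd⟩ := hPhat
  have hinj : Function.Injective (⇑((1 : E n →L[ℝ] E n) + Phat)) := by
    rw [injective_iff_map_eq_zero]
    intro x hx
    have h0 : (0:ℝ) = ‖x‖^2 + inner ℝ (Phat x) x := by
      have h1 : (inner ℝ ((1 + Phat) x) x : ℝ) = 0 := by rw [hx]; simp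
      simp only [ContinuousLinearMap.add_apply, ContinuousLinearMap.one_apply,
        inner_add_left, real_inner_self_eq_norm_sq] at h1
      linarith
    have : ‖x‖^2 ≤ 0 := by nlinarith [hpsd x]
    simpa using le_antisymm this (by positivity)
  have hbij : Function.Bijective (⇑((1 : E n →L[ℝ] E n) + Phat)) :=
    ⟨hinj, LinearMap.injective_iff_surjective.mp hinj⟩
  have hunit : IsUnit (1 + Phat) := ContinuousLinearMap.isUnit_iff_bijective.mpr hbij
  refine ⟨hunit, fun x => ?_⟩
  set B := Ring.inverse (1 + Phat) with hB
  have hBinv : ∀ z : E n, (1 + Phat) (B z) = z := by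
    intro z
    have h := Ring.mul_inverse_cancel _ hunit
    calc (1 + Phat) (B z) = ((1 + Phat) * B) z := rfl
      _ = z := by rw [h]; rfl
  set P := projCLM T with hP
  have hPapp : ∀ z : E n, P z = (T.orthogonalProjectionOnto z : E n) := fun z => rfl
  have hPnorm : ∀ z : E n, ‖P z‖ ≤ ‖z‖ := by
    intro z
    rw [hPapp]
    calc ‖(T.orthogonalProjectionOnto z : E n)‖ ≤ ‖T.orthogonalProjectionOnto‖ * ‖z‖ :=
          (T.orthogonalProjectionOnto).le_opNorm z
      _ ≤ ‖z‖ := mul_le_of_le_one_left (norm_nonneg z) (Submodule.orthogonalProjectionOnto_norm_le T)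
  set y := P x with hy
  set z := B y with hz
  have hzy : z + Phat z = y := by
    have := hBinv y
    simpa [ContinuousLinearMap.add_apply] using this
  have key : (inner ℝ ((P * B * P) x) x : ℝ) = inner ℝ z y := by
    have : (P * B * P) x = P z := rfl
    rw [this, hPapp]
    rw [show ((T.orthogonalProjectionOnto z : E n)) = T.starProjection z from rfl,
      Submodule.inner_starProjection_left_eq_right]
    rfl
  have hzy2 : (inner ℝ z y : ℝ) = ‖z‖^2 + inner ℝ z (Phat z) := by
    rw [← hzy, inner_add_right, real_inner_self_eq_norm_sq]
  have hPz : ‖(P * B * P) x‖ ≤ ‖z‖ := hPnorm z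
  have hpos : (0:ℝ) ≤ inner ℝ z (Phat z) := by rw [real_inner_comm]; exact hpsd z
  rw [key, hzy2]
  nlinarith [norm_nonneg ((P * B * P) x), norm_nonneg z]
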